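/- Let X be a metric space with a discretization system (φ_n, ψ_n, P_n) as above, Y a Banach space, K ⊂ X compact, and G : K → Y continuous. Then for every ε > 0 there exist p, q ∈ ℕ, continuous functions g_j ∈ C(ℝ^{κ(q)}) and elements u_j ∈ Y (j = 1,…,p) such that sup_{v∈K} ‖G(v) − Σ_{j=1}^p g_j(φ_q(v))·u_j‖_Y < ε. -/
import Mathlib


/-- Separable (tensor-product) form of the approximation theorem
for metric-to-Banach mappings, underlying MIONet. With the same discretization
system as before, for every `ε > 0` there exist `p, q`, continuous functions
`g j : ℝ^{κ q} → ℝ` and elements `u j ∈ Y` (`j = 1,…,p`) such that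
`sup_{v∈K} ‖G v − Σ_{j=1}^p g j (φ q v) • u j‖ < ε`. -/
theorem stmt_3 {X : Type*} [MetricSpace X] {Y : Type*} [NormedAddCommGroup Y]
    [NormedSpace ℝ Y] [CompleteSpace Y]
    (κ : ℕ → ℕ) (hκ : StrictMono κ)
    (φ : ∀ n : ℕ, X → (Fin (κ n) → ℝ))
    (ψ : ∀ n : ℕ, (Fin (κ n) → ℝ) → X)
    (hφ : ∀ n, Continuous (φ n))
    (hψ : ∀ n, ContinuousOn (ψ n) (Set.range (φ n)))
    (hP : ∀ K : Set X, IsCompact K →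
      ∀ ε > (0 : ℝ), ∃ N : ℕ, ∀ n ≥ N, ∀ x ∈ K, dist x (ψ n (φ n x)) < ε)
    (K : Set X) (hK : IsCompact K) (G : X → Y) (hG : ContinuousOn G K)
    (ε : ℝ) (hε : 0 < ε) :
    ∃ (p q : ℕ) (g : Fin p → (Fin (κ q) → ℝ) → ℝ) (u : Fin p → Y),
      0 < p ∧ 0 < q ∧ (∀ j, Continuous (g j)) ∧
      ∀ v ∈ K, ‖G v - ∑ j : Fin p, g j (φ q v) • u j‖ < ε := by
  rcases K.eq_empty_or_nonempty with hKe | hKne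
  · refine ⟨1, 1, fun _ _ => 0, fun _ => 0, one_pos, one_pos,
      fun _ => continuous_const, ?_⟩
    intro v hv
    rw [hKe] at hv
    exact absurd hv (Set.notMem_empty v)
  -- uniform continuity of G on K
  have hUC : UniformContinuousOn G K := hK.uniformContinuousOn_of_continuous hG
  rw [Metric.uniformContinuousOn_iff] at hUC
  obtain ⟨δ₁, hδ₁, hδG⟩ := hUC (ε / 2) (by linarith)
  obtain ⟨N, hN⟩ := hP K hK (δ₁ / 4) (by linarith)
  set q := N + 1 with hq
  have hqN : q ≥ N := Nat.le_succ N
  set A := φ q '' K with hAdef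
  have hAc : IsCompact A := hK.image (hφ q)
  have hAne : A.Nonempty := hKne.image _
  have hψA : ContinuousOn (ψ q) A := (hψ q).mono (Set.image_subset_range _ _)
  have hψUC : UniformContinuousOn (ψ q) A := hAc.uniformContinuousOn_of_continuous hψA
  rw [Metric.uniformContinuousOn_iff] at hψUC
  obtain ⟨η, hη, hηψ⟩ := hψUC (δ₁ / 4) (by linarith)
  -- finite subcover of A by balls of radius η/2 with centers in A
  have hcov : A ⊆ ⋃ a ∈ A, Metric.ball a (η / 2) := fun a ha =>
    Set.mem_biUnion ha (Metric.mem_ball_self (by linarith))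
  obtain ⟨b, hbA, hbfin, hbcov⟩ :=
    hAc.elim_finite_subcover_image (fun a _ => Metric.isOpen_ball) hcov
  classical
  set t : Finset (Fin (κ q) → ℝ) := hbfin.toFinset with ht
  have hmem_t : ∀ a, a ∈ t ↔ a ∈ b := fun a => hbfin.mem_toFinset
  have htne : t.Nonempty := by
    obtain ⟨a0, ha0⟩ := hAne
    have := hbcov ha0
    simp only [Set.mem_iUnion] at this
    obtain ⟨a, haB, _⟩ := this
    exact ⟨a, (hmem_t a).2 haB⟩
  set p := t.card with hp
  have hp0 : 0 < p := Finset.card_pos.mpr htne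
  set e : Fin p → t := fun i => t.equivFin.symm i with he
  set a : Fin p → (Fin (κ q) → ℝ) := fun i => (e i : Fin (κ q) → ℝ) with ha
  have haB : ∀ i, a i ∈ b := fun i => (hmem_t _).1 (e i).2
  have haA : ∀ i, a i ∈ A := fun i => hbA (haB i)
  -- pick preimages in K
  have hpre : ∀ i, ∃ w ∈ K, φ q w = a i := fun i => by
    obtain ⟨w, hwK, hwφ⟩ := haA i
    exact ⟨w, hwK, hwφ⟩
  choose w hwK hwφ using hpre
  -- bump functions
  set g₀ : Fin p → (Fin (κ q) → ℝ) → ℝ :=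
    fun i x => max (η / 2 - dist x (a i)) 0 with hg₀
  have hg₀cont : ∀ i, Continuous (g₀ i) := fun i =>
    (continuous_const.sub (continuous_id.dist continuous_const)).max continuous_const
  have hg₀nn : ∀ i x, 0 ≤ g₀ i x := fun i x => le_max_right _ _
  set S : (Fin (κ q) → ℝ) → ℝ := fun x => ∑ i : Fin p, g₀ i x with hS
  have hScont : Continuous S := continuous_finset_sum _ fun i _ => hg₀cont i
  have hSnn : ∀ x, 0 ≤ S x := fun x => Finset.sum_nonneg fun i _ => hg₀nn i x
  have hSpos : ∀ x ∈ A, 0 < S x := by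
    intro x hx
    have := hbcov hx
    simp only [Set.mem_iUnion] at this
    obtain ⟨a', ha'B, hxball⟩ := this
    set i : Fin p := t.equivFin ⟨a', (hmem_t a').2 ha'B⟩ with hi
    have hai : a i = a' := by
      simp only [ha, he, hi, Equiv.symm_apply_apply]
    have hdist : dist x (a i) < η / 2 := by
      rw [hai]; exact Metric.mem_ball.mp hxball
    have hterm : 0 < g₀ i x := lt_max_of_lt_left (by linarith)
    calc 0 < g₀ i x := hterm
      _ ≤ S x := Finset.single_le_sum (fun j _ => hg₀nn j x) (Finset.mem_univ i)
  -- minimum of S on A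
  obtain ⟨x₀, hx₀A, hx₀min⟩ := hAc.exists_isMinOn hAne hScont.continuousOn
  set c : ℝ := S x₀ with hc
  have hcpos : 0 < c := hSpos x₀ hx₀A
  have hdenpos : ∀ x, 0 < max (S x) c := fun x => lt_of_lt_of_le hcpos (le_max_right _ _)
  set g : Fin p → (Fin (κ q) → ℝ) → ℝ :=
    fun i x => g₀ i x / max (S x) c with hg
  have hgcont : ∀ i, Continuous (g i) := fun i =>
    (hg₀cont i).div (hScont.max continuous_const) (fun x => (hdenpos x).ne')
  have hgnn : ∀ i x, 0 ≤ g i x := fun i x =>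
    div_nonneg (hg₀nn i x) (hdenpos x).le
  have hmaxA : ∀ x ∈ A, max (S x) c = S x := fun x hx =>
    max_eq_left (hx₀min hx)
  have hsum1 : ∀ x ∈ A, (∑ i : Fin p, g i x) = 1 := by
    intro x hx
    simp only [hg]
    rw [← Finset.sum_div, hmaxA x hx]
    exact div_self (hSpos x hx).ne'
  refine ⟨p, q, g, fun i => G (w i), hp0, Nat.succ_pos N, hgcont, ?_⟩
  intro v hv
  set x := φ q v with hx
  have hxA : x ∈ A := Set.mem_image_of_mem _ hv
  -- per-term bound
  have hterm : ∀ i : Fin p, g i x * ‖G v - G (w i)‖ ≤ g i x * (ε / 2) := by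
    intro i
    rcases eq_or_lt_of_le (hgnn i x) with h0 | hpos
    · rw [← h0]; simp
    · have hg₀pos : 0 < g₀ i x := by
        by_contra h
        push_neg at h
        have h0 : g₀ i x = 0 := le_antisymm h (hg₀nn i x)
        have hpos' : 0 < g₀ i x / (S x ⊔ c) := hpos
        rw [h0] at hpos'
        simp at hpos'
      have hdist : dist x (a i) < η := by
        have : 0 < η / 2 - dist x (a i) := by
          by_contra h
          push_neg at h
          have : g₀ i x = 0 := max_eq_right h ▸ rfl
          linarith
        linarith
      have h1 : dist (ψ q x) (ψ q (a i)) < δ₁ / 4 := hηψ x hxA (a i) (haA i) hdist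
      have h2 : dist v (ψ q x) < δ₁ / 4 := hN q hqN v hv
      have h3 : dist (ψ q (a i)) (w i) < δ₁ / 4 := by
        rw [← hwφ i, dist_comm]
        exact hN q hqN (w i) (hwK i)
      have hvw : dist v (w i) < δ₁ := by
        calc dist v (w i) ≤ dist v (ψ q x) + dist (ψ q x) (ψ q (a i)) + dist (ψ q (a i)) (w i) :=
              dist_triangle4 _ _ _ _
          _ < δ₁ / 4 + δ₁ / 4 + δ₁ / 4 := by linarith
          _ ≤ δ₁ := by linarith
      have hGclose : dist (G v) (G (w i)) < ε / 2 := hδG v hv (w i) (hwK i) hvw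
      have : ‖G v - G (w i)‖ ≤ ε / 2 := by
        rw [← dist_eq_norm]; exact hGclose.le
      exact mul_le_mul_of_nonneg_left this (hgnn i x)
  -- assemble
  have hrw : G v - ∑ i : Fin p, g i x • G (w i) = ∑ i : Fin p, g i x • (G v - G (w i)) := by
    rw [Finset.sum_congr rfl (fun i _ => smul_sub (g i x) (G v) (G (w i))),
      Finset.sum_sub_distrib, ← Finset.sum_smul, hsum1 x hxA, one_smul]
  calc ‖G v - ∑ i : Fin p, g i x • G (w i)‖
      = ‖∑ i : Fin p, g i x • (G v - G (w i))‖ := by rw [hrw]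
    _ ≤ ∑ i : Fin p, ‖g i x • (G v - G (w i))‖ := norm_sum_le _ _
    _ = ∑ i : Fin p, g i x * ‖G v - G (w i)‖ := by
        refine Finset.sum_congr rfl fun i _ => ?_
        rw [norm_smul, Real.norm_eq_abs, abs_of_nonneg (hgnn i x)]
    _ ≤ ∑ i : Fin p, g i x * (ε / 2) := Finset.sum_le_sum fun i _ => hterm i
    _ = (∑ i : Fin p, g i x) * (ε / 2) := by rw [Finset.sum_mul]
    _ = ε / 2 := by rw [hsum1 x hxA, one_mul]
    _ < ε := by linarith
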